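/- arXiv:math/0602008 — 3 statements merged into one kernel-verified Lean document; each statement's English description precedes it below -/
import Mathlib

section
/- Let p > 2 and let B be a standard Brownian motion on [−1,1]. Then the process (T_h^B)_{h∈[0,1]} has a modification S^{B,p} that is continuous in the p-variation norm: there exists a process S^{B,p} : [0,1] × Ω → C([0,1]) such that for every h ∈ [0,1], P(S_h^{B,p} = T_h^B) = 1, almost surely every S_h^{B,p} has finite p-variation, and almost surely the map h ↦ S_h^{B,p} is continuous from [0,1] into the space of functions of finite p-variation equipped with ‖g‖_p := ‖g‖_∞ + V_p(g). -/
open MeasureTheory ProbabilityTheory Filter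
open scoped ENNReal NNReal

/-- The `p`-variation functional of a path `g` (restricted to `[0,1]` via dissections
`0 = t 0 < t 1 < ... < t n = 1`), with values in `[0,∞]`. -/
noncomputable def pVar {V : Type*} [NormedAddCommGroup V] (p : ℝ) (g : ℝ → V) : ℝ≥0∞ :=
  ⨆ (n : ℕ) (t : Fin (n+1) → ℝ) (_ : StrictMono t) (_ : t 0 = 0) (_ : t (Fin.last n) = 1),
    (∑ i : Fin n, (ENNReal.ofReal ‖g (t i.succ) - g (t i.castSucc)‖) ^ p) ^ p⁻¹

/-- The sup-norm of `g` over `[0,1]`, valued in `[0,∞]`. -/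
noncomputable def supE (g : ℝ → ℝ) : ℝ≥0∞ := ⨆ u : Set.Icc (0:ℝ) 1, ENNReal.ofReal |g u|

/-- The `p`-variation norm `‖g‖_p = ‖g‖_∞ + V_p(g)`, valued in `[0,∞]`. -/
noncomputable def pNormE (p : ℝ) (g : ℝ → ℝ) : ℝ≥0∞ := supE g + pVar p g

/-- `B` is a standard Brownian motion on `[-1,1]` (with `B₋₁ = 0`) under the probability
measure `P`: it has a.s. continuous sample paths, Gaussian increments of variance `t - s`,
and independent increments over disjoint intervals. -/
structure IsStdBM {Ω : Type*} [MeasurableSpace Ω] (P : Measure Ω) (B : ℝ → Ω → ℝ) : Prop where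
  meas : ∀ t : ℝ, Measurable (B t)
  start : ∀ᵐ ω ∂P, B (-1) ω = 0
  cont : ∀ᵐ ω ∂P, ContinuousOn (fun t => B t ω) (Set.Icc (-1) 1)
  gauss : ∀ s t : ℝ, -1 ≤ s → s ≤ t → t ≤ 1 →
    P.map (fun ω => B t ω - B s ω) = gaussianReal 0 (Real.toNNReal (t - s))
  indep : ∀ (n : ℕ) (t : Fin (n+1) → ℝ), Monotone t → -1 ≤ t 0 → t (Fin.last n) ≤ 1 →
    iIndepFun
      (fun i : Fin n => fun ω => B (t i.succ) ω - B (t i.castSucc) ω) P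


open Real Topology in
lemma gauss_tail {v : ℝ≥0} (hv : v ≠ 0) {ε : ℝ} (hε : 0 ≤ ε) :
    gaussianReal 0 v {x : ℝ | ε ≤ |x|} ≤
      ENNReal.ofReal (Real.sqrt 2 * Real.exp (-(ε^2) / (4 * v))) := by
  have hvpos : (0:ℝ) < v := by positivity
  have h2v : (2 * v : ℝ≥0) ≠ 0 := by simp [hv]
  rw [gaussianReal_apply 0 hv]
  have key : ∀ x ∈ {x : ℝ | ε ≤ |x|}, gaussianPDF 0 v x ≤
      ENNReal.ofReal (Real.sqrt 2 * Real.exp (-(ε^2) / (4 * v))) * gaussianPDF 0 (2*v) x := by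
    intro x hx
    simp only [Set.mem_setOf_eq] at hx
    rw [gaussianPDF, gaussianPDF, ← ENNReal.ofReal_mul (by positivity)]
    apply ENNReal.ofReal_le_ofReal
    rw [gaussianPDFReal, gaussianPDFReal]
    have hx2 : ε^2 ≤ x^2 := by
      have : ε ≤ |x| := hx
      calc ε^2 ≤ |x|^2 := by nlinarith [abs_nonneg x]
        _ = x^2 := sq_abs x
    have hnorm : (Real.sqrt (2 * π * v))⁻¹ = Real.sqrt 2 * (Real.sqrt (2 * π * (2*v : ℝ≥0)))⁻¹ := by
      push_cast
      have h1 : Real.sqrt (2*(2*π*(v:ℝ))) = Real.sqrt 2 * Real.sqrt (2*π*(v:ℝ)) :=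
        Real.sqrt_mul (by norm_num) _
      rw [show 2 * π * (2 * (v:ℝ)) = 2 * (2 * π * (v:ℝ)) by ring, h1, mul_inv, ← mul_assoc,
        mul_inv_cancel₀ (by positivity : Real.sqrt 2 ≠ 0), one_mul]
    have hexp : rexp (-(x - 0)^2 / (2*v)) ≤
        rexp (-(ε^2) / (4*v)) * rexp (-(x - 0)^2 / (2 * (2*v : ℝ≥0))) := by
      rw [← Real.exp_add]
      apply Real.exp_le_exp.mpr
      push_cast
      rw [div_add_div _ _ (by positivity : (4:ℝ)*v ≠ 0) (by positivity : 2*(2*(v:ℝ)) ≠ 0)]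
      rw [div_le_div_iff₀ (by positivity) (by positivity)]
      ring_nf
      nlinarith [hvpos, hx2]
    calc (Real.sqrt (2 * π * v))⁻¹ * rexp (-(x-0)^2/(2*v))
        ≤ (Real.sqrt (2 * π * v))⁻¹ * (rexp (-(ε^2)/(4*v)) * rexp (-(x-0)^2/(2*(2*v : ℝ≥0)))) := by
          apply mul_le_mul_of_nonneg_left hexp (by positivity)
      _ = Real.sqrt 2 * rexp (-(ε^2)/(4*v)) * ((Real.sqrt (2 * π * (2*v : ℝ≥0)))⁻¹ * rexp (-(x-0)^2/(2*(2*v:ℝ≥0)))) := by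
          rw [hnorm]; ring
  calc ∫⁻ x in {x : ℝ | ε ≤ |x|}, gaussianPDF 0 v x
      ≤ ∫⁻ x in {x : ℝ | ε ≤ |x|},
          ENNReal.ofReal (Real.sqrt 2 * Real.exp (-(ε^2) / (4 * v))) * gaussianPDF 0 (2*v) x :=
        setLIntegral_mono ((measurable_const.mul (measurable_gaussianPDF 0 (2*v)))) key
    _ = ENNReal.ofReal (Real.sqrt 2 * Real.exp (-(ε^2) / (4 * v))) *
          ∫⁻ x in {x : ℝ | ε ≤ |x|}, gaussianPDF 0 (2*v) x := lintegral_const_mul _ (measurable_gaussianPDF 0 (2*v))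
    _ ≤ ENNReal.ofReal (Real.sqrt 2 * Real.exp (-(ε^2) / (4 * v))) * ∫⁻ x, gaussianPDF 0 (2*v) x := by
        gcongr
        exact Measure.restrict_le_self
    _ = ENNReal.ofReal (Real.sqrt 2 * Real.exp (-(ε^2) / (4 * v))) := by
        rw [lintegral_gaussianPDF_eq_one 0 h2v, mul_one]

lemma rpow_pow_comm {x : ℝ} (hx : 0 ≤ x) (α : ℝ) (n : ℕ) : ((x^n:ℝ)) ^ α = (x ^ α) ^ n := by
  rw [← Real.rpow_natCast x n, ← Real.rpow_natCast (x^α) n, ← Real.rpow_mul hx,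
    ← Real.rpow_mul hx, mul_comm]


open Real Topology in
lemma chain {f : ℝ → ℝ} {α : ℝ} (hα0 : 0 < α) (hα1 : α < 1) {N : ℕ}
    (hf : ContinuousOn f (Set.Icc (-1) 1))
    (H : ∀ n : ℕ, N ≤ n → ∀ k : ℤ, -2^n < k → k ≤ 2^n →
      |f ((k:ℝ)/2^n) - f (((k:ℝ)-1)/2^n)| ≤ ((2:ℝ)^n)⁻¹ ^ α) :
    ∃ C, 0 ≤ C ∧ ∀ s ∈ Set.Icc (-1:ℝ) 1, ∀ t ∈ Set.Icc (-1:ℝ) 1,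
      |f t - f s| ≤ C * |t - s| ^ α := by
  set ρ : ℝ := (2:ℝ)⁻¹ ^ α with hρdef
  have hρ0 : 0 < ρ := Real.rpow_pos_of_pos (by norm_num) _
  have hρ1 : ρ < 1 := Real.rpow_lt_one (by norm_num) (by norm_num) hα0
  have hρn : ∀ n : ℕ, ((2:ℝ)^n)⁻¹ ^ α = ρ^n := by
    intro n
    rw [← inv_pow, _root_.rpow_pow_comm (by norm_num)]
  have h2n : ∀ n : ℕ, (0:ℝ) < 2^n := fun n => by positivity
  set d : ℕ → ℝ → ℝ := fun n x => (⌊x * 2^n⌋ : ℝ)/2^n with hddef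
  have hfloor_lb : ∀ (n : ℕ) (x : ℝ), -1 ≤ x → -(2:ℤ)^n ≤ ⌊x * 2^n⌋ := by
    intro n x hx
    apply Int.le_floor.mpr
    push_cast
    nlinarith [h2n n]
  have hfloor_ub : ∀ (n : ℕ) (x : ℝ), x ≤ 1 → ⌊x * 2^n⌋ ≤ (2:ℤ)^n := by
    intro n x hx
    have : (⌊x * 2^n⌋ : ℝ) ≤ (((2:ℤ)^n : ℤ) : ℝ) := by
      refine le_trans (Int.floor_le _) ?_
      push_cast
      nlinarith [h2n n]
    exact_mod_cast this
  have hdmem : ∀ (n : ℕ) (x : ℝ), x ∈ Set.Icc (-1:ℝ) 1 → d n x ∈ Set.Icc (-1:ℝ) 1 := by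
    intro n x hx
    have h1 := hfloor_lb n x hx.1
    have h2 := hfloor_ub n x hx.2
    constructor
    · rw [hddef]
      rw [le_div_iff₀ (h2n n)]
      calc (-1:ℝ) * 2^n = ((-(2:ℤ)^n : ℤ) : ℝ) := by push_cast; ring
        _ ≤ _ := by exact_mod_cast h1
    · rw [hddef]
      rw [div_le_one (h2n n)]
      calc (⌊x * 2^n⌋:ℝ) ≤ (((2:ℤ)^n : ℤ):ℝ) := by exact_mod_cast h2
        _ = 2^n := by push_cast; ring
  have hdle : ∀ (n : ℕ) (x : ℝ), d n x ≤ x := by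
    intro n x
    rw [hddef, div_le_iff₀ (h2n n)]
    exact Int.floor_le _
  have hdgt : ∀ (n : ℕ) (x : ℝ), x - ((2:ℝ)^n)⁻¹ < d n x := by
    intro n x
    rw [hddef, lt_div_iff₀ (h2n n)]
    have := Int.sub_one_lt_floor (x * 2^n)
    calc (x - ((2:ℝ)^n)⁻¹) * 2^n = x * 2^n - 1 := by field_simp
      _ < _ := this
  -- single dyadic step
  have step : ∀ n : ℕ, N ≤ n → ∀ x ∈ Set.Icc (-1:ℝ) 1,
      |f (d (n+1) x) - f (d n x)| ≤ ρ^(n+1) := by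
    intro n hn x hx
    set k := ⌊x * 2^(n+1)⌋ with hk
    set j := ⌊x * 2^n⌋ with hj
    have hjle : (j:ℝ) ≤ x * 2^n := Int.floor_le _
    have hjlt : x * 2^n < (j:ℝ) + 1 := Int.lt_floor_add_one _
    have hcases : k = 2*j ∨ k = 2*j + 1 := by
      have hx2 : x * 2^(n+1) = (x * 2^n) * 2 := by ring
      have h1 : 2*j ≤ k := by
        apply Int.le_floor.mpr
        rw [hx2]; push_cast; linarith
      have h2 : k < 2*j + 2 := by
        apply Int.floor_lt.mpr
        rw [hx2]; push_cast; linarith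
      omega
    have e1 : d (n+1) x = (k:ℝ)/2^(n+1) := rfl
    have e2 : d n x = (j:ℝ)/2^n := rfl
    rcases hcases with hc | hc
    · have : d (n+1) x = d n x := by
        rw [e1, e2, hc]
        push_cast
        rw [pow_succ]
        field_simp
      rw [this, sub_self, abs_zero]
      positivity
    · have hdn1 : d (n+1) x = (k:ℝ)/2^(n+1) := e1
      have hdn : d n x = ((k:ℝ)-1)/2^(n+1) := by
        rw [e2, hc]
        push_cast
        rw [pow_succ]
        field_simp
        ring
      rw [hdn1, hdn, ← hρn (n+1)]
      apply H (n+1) (le_trans hn (Nat.le_succ n))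
      · have hjlb : -(2:ℤ)^n ≤ j := hfloor_lb n x hx.1
        have : (2:ℤ)^(n+1) = 2 * 2^n := by ring
        omega
      · have := hfloor_ub (n+1) x hx.2
        omega
  -- telescoping
  have tele : ∀ x ∈ Set.Icc (-1:ℝ) 1, ∀ n : ℕ, N ≤ n → ∀ m : ℕ, n ≤ m →
      |f (d m x) - f (d n x)| ≤ (1-ρ)⁻¹ * ρ^(n+1) - (1-ρ)⁻¹ * ρ^(m+1) := by
    intro x hx n hn m hm
    induction m, hm using Nat.le_induction with
    | base => simp
    | succ m hm IH =>
      have h1 : |f (d (m+1) x) - f (d n x)| ≤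
          |f (d (m+1) x) - f (d m x)| + |f (d m x) - f (d n x)| := abs_sub_le _ _ _
      have h2 := step m (le_trans hn hm) x hx
      have hkey : (1-ρ)⁻¹ * ρ^(m+1) - (1-ρ)⁻¹ * (ρ^(m+1) * ρ) = ρ^(m+1) := by
        have hc : (1-ρ)⁻¹ * (1-ρ) = 1 := inv_mul_cancel₀ (by linarith)
        calc (1-ρ)⁻¹ * ρ^(m+1) - (1-ρ)⁻¹ * (ρ^(m+1) * ρ) = ρ^(m+1) * ((1-ρ)⁻¹ * (1-ρ)) := by ring
          _ = ρ^(m+1) := by rw [hc, mul_one]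
      have hρs : ρ^(m+1+1) = ρ^(m+1) * ρ := pow_succ _ _
      rw [hρs]
      linarith
  -- limit along dyadics
  have htendsto : ∀ x ∈ Set.Icc (-1:ℝ) 1, Tendsto (fun m => f (d m x)) atTop (𝓝 (f x)) := by
    intro x hx
    have hd : Tendsto (fun m => d m x) atTop (𝓝 x) := by
      have hlo : Tendsto (fun m : ℕ => x - ((2:ℝ)^m)⁻¹) atTop (𝓝 (x - 0)) := by
        apply Tendsto.const_sub
        apply tendsto_inv_atTop_zero.comp
        exact tendsto_pow_atTop_atTop_of_one_lt one_lt_two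
      rw [sub_zero] at hlo
      exact tendsto_of_tendsto_of_tendsto_of_le_of_le hlo tendsto_const_nhds
        (fun m => le_of_lt (hdgt m x)) (fun m => hdle m x)
    have hd' : Tendsto (fun m => d m x) atTop (𝓝[Set.Icc (-1:ℝ) 1] x) :=
      tendsto_nhdsWithin_of_tendsto_nhds_of_eventually_within _ hd
        (Eventually.of_forall fun m => hdmem m x hx)
    exact (hf x hx).tendsto.comp hd'
  -- base level comparison
  have base : ∀ n : ℕ, N ≤ n → ∀ s t : ℝ, s ∈ Set.Icc (-1:ℝ) 1 → t ∈ Set.Icc (-1:ℝ) 1 →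
      s ≤ t → t - s ≤ ((2:ℝ)^n)⁻¹ → |f (d n t) - f (d n s)| ≤ ρ^n := by
    intro n hn s t hs ht hst hts
    set a := ⌊s * 2^n⌋ with ha
    set b := ⌊t * 2^n⌋ with hb
    have hab : a ≤ b := Int.floor_le_floor (by nlinarith [h2n n])
    have hba : b ≤ a + 1 := by
      have h1 : t * 2^n ≤ s * 2^n + 1 := by
        have : (t - s) * 2^n ≤ 1 := by
          rw [← le_div_iff₀ (h2n n)]
          rw [div_eq_mul_inv, one_mul]
          exact hts
        nlinarith
      calc b ≤ ⌊s * 2^n + 1⌋ := Int.floor_le_floor h1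
        _ = a + 1 := by rw [Int.floor_add_one]
    have hcase : b = a ∨ b = a + 1 := by omega
    have e1 : d n t = (b:ℝ)/2^n := rfl
    have e2 : d n s = (a:ℝ)/2^n := rfl
    rcases hcase with hc | hc
    · have : d n t = d n s := by rw [e1, e2, hc]
      rw [this, sub_self, abs_zero]
      positivity
    · have hd1 : d n t = (b:ℝ)/2^n := e1
      have hd2 : d n s = ((b:ℝ)-1)/2^n := by
        rw [e2, hc]
        push_cast
        ring
      rw [hd1, hd2, ← hρn n]
      apply H n hn
      · have := hfloor_lb n s hs.1
        omega
      · exact hfloor_ub n t ht.2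
  -- combine: small separation
  have combine : ∀ n : ℕ, N ≤ n → ∀ s t : ℝ, s ∈ Set.Icc (-1:ℝ) 1 → t ∈ Set.Icc (-1:ℝ) 1 →
      s ≤ t → t - s ≤ ((2:ℝ)^n)⁻¹ →
      |f t - f s| ≤ (1 + 2*((1-ρ)⁻¹ * ρ)) * ρ^n := by
    intro n hn s t hs ht hst hts
    have hmain : ∀ η : ℝ, 0 < η → |f t - f s| ≤ (1 + 2*((1-ρ)⁻¹ * ρ)) * ρ^n + η := by
      intro η hη
      obtain ⟨N₁, hN₁⟩ := Metric.tendsto_atTop.mp (htendsto t ht) (η/2) (by linarith)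
      obtain ⟨N₂, hN₂⟩ := Metric.tendsto_atTop.mp (htendsto s hs) (η/2) (by linarith)
      set m := max n (max N₁ N₂) with hm
      have hmn : n ≤ m := le_max_left _ _
      have h1 : |f t - f (d m t)| < η/2 := by
        have := hN₁ m (le_trans (le_max_left _ _) (le_max_right _ _))
        rw [Real.dist_eq] at this
        rw [abs_sub_comm]
        exact this
      have h2 : |f (d m s) - f s| < η/2 := by
        have := hN₂ m (le_trans (le_max_right _ _) (le_max_right _ _))
        rw [Real.dist_eq] at this
        exact this
      have h3 := tele t ht n hn m hmn
      have h4 := tele s hs n hn m hmn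
      have h5 := base n hn s t hs ht hst hts
      have htri : |f t - f s| ≤ |f t - f (d m t)| + |f (d m t) - f (d n t)| +
          |f (d n t) - f (d n s)| + |f (d n s) - f (d m s)| + |f (d m s) - f s| := by
        have t1 : |f t - f s| ≤ |f t - f (d m t)| + |f (d m t) - f s| := abs_sub_le _ _ _
        have t2 : |f (d m t) - f s| ≤ |f (d m t) - f (d n t)| + |f (d n t) - f s| := abs_sub_le _ _ _
        have t3 : |f (d n t) - f s| ≤ |f (d n t) - f (d n s)| + |f (d n s) - f s| := abs_sub_le _ _ _
        have t4 : |f (d n s) - f s| ≤ |f (d n s) - f (d m s)| + |f (d m s) - f s| := abs_sub_le _ _ _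
        linarith
      have h1ρ : (0:ℝ) < 1 - ρ := by linarith
      have hpos1 : 0 ≤ (1-ρ)⁻¹ * ρ^(m+1) := by positivity
      have h3' : |f (d m t) - f (d n t)| ≤ (1-ρ)⁻¹ * ρ^(n+1) := by linarith
      have h4' : |f (d n s) - f (d m s)| ≤ (1-ρ)⁻¹ * ρ^(n+1) := by
        rw [abs_sub_comm]; linarith
      have hρs : ρ^(n+1) = ρ^n * ρ := pow_succ _ _
      rw [hρs] at h3' h4'
      have hexp : (1 + 2*((1-ρ)⁻¹ * ρ)) * ρ^n = ρ^n + 2*((1-ρ)⁻¹ * (ρ^n * ρ)) := by ring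
      rw [hexp]
      linarith
    by_contra hcon
    push_neg at hcon
    have := hmain ((|f t - f s| - (1 + 2*((1-ρ)⁻¹ * ρ)) * ρ^n)/2) (by linarith)
    linarith
  -- global bound
  obtain ⟨Mb, hMb⟩ := (isCompact_Icc : IsCompact (Set.Icc (-1:ℝ) 1)).exists_bound_of_continuousOn hf
  set Mb' := max Mb 0 with hMb'
  have hMb0 : 0 ≤ Mb' := le_max_right _ _
  have hMbb : ∀ x ∈ Set.Icc (-1:ℝ) 1, |f x| ≤ Mb' := by
    intro x hx
    calc |f x| = ‖f x‖ := (Real.norm_eq_abs _).symm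
      _ ≤ Mb := hMb x hx
      _ ≤ Mb' := le_max_left _ _
  set K₁ : ℝ := 1 + 2*((1-ρ)⁻¹ * ρ) with hK₁
  have h1ρ : (0:ℝ) < 1 - ρ := by linarith
  have hK₁0 : 0 ≤ K₁ := by
    rw [hK₁]
    positivity
  set C : ℝ := max (2*K₁) ((2*Mb')/ρ^N) with hC
  have hC0 : 0 ≤ C := le_trans (by positivity) (le_max_left _ _)
  refine ⟨C, hC0, ?_⟩
  have haux : ∀ s ∈ Set.Icc (-1:ℝ) 1, ∀ t ∈ Set.Icc (-1:ℝ) 1, s ≤ t →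
      |f t - f s| ≤ C * (t - s) ^ α := by
    intro s hs t ht hst
    rcases eq_or_lt_of_le hst with heq | hlt
    · rw [← heq, sub_self, sub_self, abs_zero, Real.zero_rpow (ne_of_gt hα0), mul_zero]
    · set r := t - s with hr
      have hr0 : 0 < r := by simp [hr]; linarith
      have hrα : 0 < r ^ α := Real.rpow_pos_of_pos hr0 _
      by_cases hbig : ((2:ℝ)^N)⁻¹ < r
      · -- big separation
        have h1 : |f t - f s| ≤ 2 * Mb' := by
          have := hMbb t ht
          have := hMbb s hs
          have habs : |f t - f s| ≤ |f t| + |f s| := by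
            calc |f t - f s| = |f t + -(f s)| := by rw [sub_eq_add_neg]
              _ ≤ |f t| + |-(f s)| := abs_add_le _ _
              _ = |f t| + |f s| := by rw [abs_neg]
          linarith
        have hρN : ρ^N ≤ r^α := by
          rw [← hρn N]
          exact Real.rpow_le_rpow (by positivity) (le_of_lt hbig) (le_of_lt hα0)
        have hρNpos : 0 < ρ^N := by positivity
        calc |f t - f s| ≤ 2 * Mb' := h1
          _ = (2*Mb'/ρ^N) * ρ^N := by field_simp
          _ ≤ (2*Mb'/ρ^N) * r^α := by
              apply mul_le_mul_of_nonneg_left hρN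
              positivity
          _ ≤ C * r^α := by
              apply mul_le_mul_of_nonneg_right (le_max_right _ _) (le_of_lt hrα)
      · -- small separation
        push_neg at hbig
        have hex : ∃ n : ℕ, ((2:ℝ)^(n+1))⁻¹ < r := by
          obtain ⟨n, hn⟩ := exists_pow_lt_of_lt_one hr0 (by norm_num : (1/2:ℝ) < 1)
          refine ⟨n, ?_⟩
          have e1 : ((2:ℝ)^(n+1))⁻¹ = (1/2:ℝ)^(n+1) := by
            rw [← inv_pow]; norm_num
          have e2 : (1/2:ℝ)^(n+1) < (1/2:ℝ)^n := by
            rw [pow_succ]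
            nlinarith [pow_pos (by norm_num : (0:ℝ) < 1/2) n]
          linarith [hn, e2, e1.le]
        set n₀ := Nat.find hex with hn₀def
        have hn₀ : ((2:ℝ)^(n₀+1))⁻¹ < r := Nat.find_spec hex
        have hrn₀ : r ≤ ((2:ℝ)^n₀)⁻¹ := by
          rcases Nat.eq_zero_or_pos n₀ with h0 | hpos
          · rw [h0]
            simp only [pow_zero, inv_one]
            calc r ≤ ((2:ℝ)^N)⁻¹ := hbig
              _ ≤ 1 := by
                  rw [inv_le_one_iff₀]
                  right
                  exact one_le_pow₀ (by norm_num)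
          · obtain ⟨m, hm⟩ := Nat.exists_eq_succ_of_ne_zero (Nat.pos_iff_ne_zero.mp hpos)
            have := Nat.find_min hex (by omega : m < n₀)
            push_neg at this
            rw [hm]
            exact this
        have hNn₀ : N ≤ n₀ := by
          have h1 : ((2:ℝ)^(n₀+1))⁻¹ < ((2:ℝ)^N)⁻¹ := lt_of_lt_of_le hn₀ hbig
          have h2 : (2:ℝ)^N < (2:ℝ)^(n₀+1) := by
            exact (inv_lt_inv₀ (h2n (n₀+1)) (h2n N)).mp h1
          have := (pow_lt_pow_iff_right₀ (by norm_num : (1:ℝ) < 2)).mp h2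
          omega
        have hcomb := combine n₀ hNn₀ s t hs ht hst (hr ▸ hrn₀)
        have hρbound : ρ^n₀ ≤ 2 * r^α := by
          have h1 : ((2:ℝ)^n₀)⁻¹ < 2*r := by
            have : ((2:ℝ)^n₀)⁻¹ = 2 * ((2:ℝ)^(n₀+1))⁻¹ := by
              rw [pow_succ]
              field_simp
            rw [this]
            linarith
          have h2 : (((2:ℝ)^n₀)⁻¹)^α ≤ (2*r)^α :=
            Real.rpow_le_rpow (by positivity) (le_of_lt h1) (le_of_lt hα0)
          have h3 : ((2:ℝ)*r)^α = (2:ℝ)^α * r^α :=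
            Real.mul_rpow (by norm_num) (le_of_lt hr0)
          have h4 : (2:ℝ)^α ≤ 2 := by
            calc (2:ℝ)^α ≤ (2:ℝ)^(1:ℝ) :=
              Real.rpow_le_rpow_of_exponent_le (by norm_num) (le_of_lt hα1)
              _ = 2 := Real.rpow_one 2
          rw [← hρn n₀]
          calc (((2:ℝ)^n₀)⁻¹)^α ≤ (2*r)^α := h2
            _ = (2:ℝ)^α * r^α := h3
            _ ≤ 2 * r^α := by
                apply mul_le_mul_of_nonneg_right h4 (le_of_lt hrα)
        calc |f t - f s| ≤ K₁ * ρ^n₀ := hcomb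
          _ ≤ K₁ * (2 * r^α) := mul_le_mul_of_nonneg_left hρbound hK₁0
          _ = (2*K₁) * r^α := by ring
          _ ≤ C * r^α := mul_le_mul_of_nonneg_right (le_max_left _ _) (le_of_lt hrα)
  intro s hs t ht
  rcases le_total s t with h | h
  · rw [abs_of_nonneg (by linarith : (0:ℝ) ≤ t - s)]
    exact haux s hs t ht h
  · have h1 : |f t - f s| = |f s - f t| := abs_sub_comm _ _
    have h2 : |t - s| = s - t := by rw [abs_sub_comm]; exact abs_of_nonneg (by linarith)
    rw [h1, h2]
    exact haux t ht s hs h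

open Real Topology in
lemma event_bound {Ω : Type*} [MeasurableSpace Ω] (P : Measure Ω)
    [IsProbabilityMeasure P] (B : ℝ → Ω → ℝ) (hB : IsStdBM P B)
    (n : ℕ) {ε : ℝ} (hε : 0 ≤ ε) (k : ℤ) (hk1 : -(2:ℤ)^n < k) (hk2 : k ≤ 2^n) :
    P {ω | ε ≤ |B ((k:ℝ)/2^n) ω - B (((k:ℝ)-1)/2^n) ω|} ≤
      ENNReal.ofReal (Real.sqrt 2 * Real.exp (-(ε^2) / (4 * ((2:ℝ)^n)⁻¹))) := by
  have h2n : (0:ℝ) < 2^n := by positivity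
  set s' : ℝ := ((k:ℝ)-1)/2^n with hs'
  set t' : ℝ := (k:ℝ)/2^n with ht'
  have hkR1 : -(2:ℝ)^n + 1 ≤ (k:ℝ) := by
    have : -(2:ℤ)^n + 1 ≤ k := by omega
    exact_mod_cast this
  have hkR2 : (k:ℝ) ≤ 2^n := by exact_mod_cast hk2
  have hs1 : -1 ≤ s' := by
    rw [hs', le_div_iff₀ h2n]
    linarith
  have ht1 : t' ≤ 1 := by
    rw [ht', div_le_one h2n]
    linarith
  have hst : s' ≤ t' := by
    rw [hs', ht', div_le_div_iff_of_pos_right h2n]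
    linarith
  have hXmeas : Measurable (fun ω => B t' ω - B s' ω) := (hB.meas t').sub (hB.meas s')
  have hsetm : MeasurableSet {x : ℝ | ε ≤ |x|} :=
    measurableSet_le measurable_const continuous_abs.measurable
  have hpre : {ω | ε ≤ |B t' ω - B s' ω|} =
      (fun ω => B t' ω - B s' ω) ⁻¹' {x : ℝ | ε ≤ |x|} := rfl
  rw [hpre, ← Measure.map_apply hXmeas hsetm, hB.gauss s' t' hs1 hst ht1]
  have hts : t' - s' = ((2:ℝ)^n)⁻¹ := by
    rw [hs', ht', div_sub_div_same]
    rw [show (k:ℝ) - ((k:ℝ)-1) = 1 by ring, one_div]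
  rw [hts]
  have hvpos : (0:ℝ) < ((2:ℝ)^n)⁻¹ := by positivity
  have hv : Real.toNNReal (((2:ℝ)^n)⁻¹) ≠ 0 := by
    rw [ne_eq, Real.toNNReal_eq_zero]
    push_neg
    exact hvpos
  have hcoe : ((Real.toNNReal (((2:ℝ)^n)⁻¹)) : ℝ) = ((2:ℝ)^n)⁻¹ :=
    Real.coe_toNNReal _ hvpos.le
  have := gauss_tail hv hε
  rw [hcoe] at this
  exact this


open Real Topology in
lemma tail_sum_ne_top {α : ℝ} (hα0 : 0 < α) (hα12 : α < 1/2) :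
    ∑' n : ℕ, ENNReal.ofReal ((2*2^n) *
      (Real.sqrt 2 * Real.exp (-(((((2:ℝ)^n)⁻¹ ^ α))^2) / (4 * ((2:ℝ)^n)⁻¹)))) ≠ ⊤ := by
  set δ : ℝ := 1 - 2*α with hδdef
  have hδ0 : 0 < δ := by rw [hδdef]; linarith
  set kk : ℕ := ⌈2/δ⌉₊ with hkkdef
  have hkk : 2 ≤ δ * kk := by
    have h1 : 2/δ ≤ (kk:ℝ) := Nat.le_ceil _
    calc (2:ℝ) = δ * (2/δ) := by field_simp
      _ ≤ δ * kk := by nlinarith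
  set fkk : ℝ := (Nat.factorial kk : ℝ) with hfkkdef
  have hfkk0 : 0 < fkk := by rw [hfkkdef]; exact_mod_cast Nat.factorial_pos kk
  set K : ℝ := 2*Real.sqrt 2*4^kk*fkk with hKdef
  have hK0 : 0 < K := by rw [hKdef]; positivity
  have key : ∀ n : ℕ, (2*2^n) *
      (Real.sqrt 2 * Real.exp (-(((((2:ℝ)^n)⁻¹ ^ α))^2) / (4 * ((2:ℝ)^n)⁻¹)))
      ≤ K * (1/2)^n := by
    intro n
    set y : ℝ := (2:ℝ)^n with hydef
    have hy0 : (0:ℝ) < y := by rw [hydef]; positivity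
    have hy1 : (1:ℝ) ≤ y := by rw [hydef]; exact one_le_pow₀ one_le_two
    have harg : ((y⁻¹ ^ α)^2) / (4 * y⁻¹) = y^δ / 4 := by
      have e1 : (y⁻¹ ^ α) ^ (2:ℕ) = y⁻¹ ^ (α*2) := by
        rw [← Real.rpow_natCast (y⁻¹ ^ α) 2, ← Real.rpow_mul (by positivity)]
        norm_num
      have e2 : y⁻¹ ^ (α*2) = (y ^ (2*α))⁻¹ := by
        rw [Real.inv_rpow hy0.le, mul_comm α 2]
      have e3 : y ^ δ = y ^ (-(2*α)) * y := by
        have := Real.rpow_add hy0 (-(2*α)) 1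
        rw [Real.rpow_one] at this
        rw [show δ = -(2*α) + 1 by rw [hδdef]; ring, this]
      rw [e1, e2, e3, Real.rpow_neg hy0.le]
      field_simp
    have hexparg : -((y⁻¹ ^ α)^2) / (4 * y⁻¹) = -(y^δ/4) := by
      rw [neg_div, harg]
    have hyδkk : (4:ℝ)^n ≤ (y^δ)^kk := by
      have h1 : (y^δ)^kk = y^(δ*(kk:ℝ)) := by
        rw [← Real.rpow_natCast (y^δ) kk, ← Real.rpow_mul hy0.le]
      have h2 : y^(2:ℝ) ≤ y^(δ*(kk:ℝ)) := Real.rpow_le_rpow_of_exponent_le hy1 hkk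
      have h3 : y^(2:ℝ) = y^(2:ℕ) := by
        rw [show (2:ℝ) = ((2:ℕ):ℝ) by norm_num, Real.rpow_natCast]
      have h4 : y^(2:ℕ) = (4:ℝ)^n := by
        rw [hydef, show (4:ℝ) = 2^2 by norm_num, ← pow_mul, ← pow_mul, Nat.mul_comm]
      rw [h1]
      calc (4:ℝ)^n = y^(2:ℕ) := h4.symm
        _ = y^(2:ℝ) := h3.symm
        _ ≤ _ := h2
    have hexp : Real.exp (-(y^δ/4)) ≤ 4^kk * fkk / 4^n := by
      have hx0 : (0:ℝ) ≤ y^δ/4 := by positivity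
      have h1 : (y^δ/4)^kk / fkk ≤ Real.exp (y^δ/4) := by
        calc (y^δ/4)^kk / fkk
            ≤ ∑ i ∈ Finset.range (kk+1), (y^δ/4)^i / (Nat.factorial i : ℝ) := by
              rw [hfkkdef]
              apply Finset.single_le_sum (f := fun i => (y^δ/4)^i/(Nat.factorial i : ℝ))
                (fun i _ => by positivity) (Finset.self_mem_range_succ kk)
          _ ≤ Real.exp (y^δ/4) := Real.sum_le_exp_of_nonneg hx0 _
      have h2 : (4:ℝ)^n / (4^kk * fkk) ≤ (y^δ/4)^kk / fkk := by
        rw [div_pow, div_div]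
        gcongr
      have hepos : (0:ℝ) < 4^n/(4^kk * fkk) := by positivity
      have h3 : (4:ℝ)^n/(4^kk*fkk) ≤ Real.exp (y^δ/4) := le_trans h2 h1
      calc Real.exp (-(y^δ/4)) = (Real.exp (y^δ/4))⁻¹ := Real.exp_neg _
        _ ≤ ((4:ℝ)^n/(4^kk*fkk))⁻¹ := by
            apply inv_anti₀ hepos h3
        _ = 4^kk*fkk/4^n := by
            rw [inv_div]
    rw [hexparg]
    have h4n : (4:ℝ)^n = 2^n * 2^n := by rw [show (4:ℝ)=2*2 by norm_num, mul_pow]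
    calc (2*2^n) * (Real.sqrt 2 * Real.exp (-(y^δ/4)))
        ≤ (2*2^n) * (Real.sqrt 2 * (4^kk*fkk/4^n)) := by
          gcongr
      _ = K * (1/2)^n := by
          rw [hKdef, h4n]
          have h2n : (0:ℝ) < 2^n := by positivity
          rw [div_pow, one_pow]
          field_simp
  have hsummable : Summable (fun n : ℕ => K * (1/2:ℝ)^n) :=
    (summable_geometric_of_lt_one (by norm_num) (by norm_num)).mul_left _
  apply ne_top_of_le_ne_top (b := ENNReal.ofReal (∑' n : ℕ, K * (1/2:ℝ)^n))
    ENNReal.ofReal_ne_top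
  calc ∑' n : ℕ, ENNReal.ofReal _ ≤ ∑' n : ℕ, ENNReal.ofReal (K * (1/2:ℝ)^n) :=
        ENNReal.tsum_le_tsum (fun n => ENNReal.ofReal_le_ofReal (key n))
    _ = ENNReal.ofReal (∑' n : ℕ, K * (1/2:ℝ)^n) :=
        (ENNReal.ofReal_tsum_of_nonneg (fun n => by positivity) hsummable).symm

open Real Topology in
lemma pVar_le_aux {g : ℝ → ℝ} {p K : ℝ} (hp : 0 < p) (hK : 0 ≤ K)
    (hincr : ∀ u v : ℝ, 0 ≤ u → u < v → v ≤ 1 → |g v - g u| ^ p ≤ K * (v - u)) :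
    pVar p g ≤ ENNReal.ofReal (K ^ p⁻¹) := by
  rw [pVar]
  refine iSup_le fun n => iSup_le fun t => iSup_le fun hmono => iSup_le fun h0 =>
    iSup_le fun h1 => ?_
  have hmem : ∀ i : Fin (n+1), t i ∈ Set.Icc (0:ℝ) 1 := by
    intro i
    constructor
    · rw [← h0]; exact hmono.monotone (Fin.zero_le i)
    · rw [← h1]; exact hmono.monotone (Fin.le_last i)
  have hterm : ∀ i : Fin n, (ENNReal.ofReal ‖g (t i.succ) - g (t i.castSucc)‖) ^ p ≤
      ENNReal.ofReal (K * (t i.succ - t i.castSucc)) := by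
    intro i
    rw [Real.norm_eq_abs, ENNReal.ofReal_rpow_of_nonneg (abs_nonneg _) hp.le]
    apply ENNReal.ofReal_le_ofReal
    exact hincr (t i.castSucc) (t i.succ) (hmem i.castSucc).1
      (hmono (Fin.castSucc_lt_succ (i := i))) (hmem i.succ).2
  have htel : ∑ i : Fin n, (t i.succ - t i.castSucc) = 1 := by
    set F : ℕ → ℝ := fun j => t ⟨min j n, by omega⟩ with hF
    have heq : ∀ i : Fin n, t i.succ - t i.castSucc = F ((i:ℕ)+1) - F (i:ℕ) := by
      intro i
      have h1 : t i.succ = F ((i:ℕ)+1) := by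
        congr 1
        exact Fin.ext (by simp [hF, Nat.min_eq_left (Nat.succ_le_of_lt i.isLt)])
      have h2 : t i.castSucc = F (i:ℕ) := by
        congr 1
        exact Fin.ext (by simp [hF, Nat.min_eq_left (le_of_lt i.isLt)])
      rw [h1, h2]
    calc ∑ i : Fin n, (t i.succ - t i.castSucc) = ∑ i : Fin n, (F ((i:ℕ)+1) - F (i:ℕ)) := by
          exact Finset.sum_congr rfl fun i _ => heq i
      _ = ∑ i ∈ Finset.range n, (F (i+1) - F i) :=
          Fin.sum_univ_eq_sum_range (fun j => F (j+1) - F j) n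
      _ = F n - F 0 := Finset.sum_range_sub F n
      _ = 1 := by
          have e1 : F n = 1 := by
            rw [hF]
            simp only [Nat.min_self]
            rw [show (⟨n, by omega⟩ : Fin (n+1)) = Fin.last n from rfl]
            exact h1
          have e2 : F 0 = 0 := by
            rw [hF]
            simp only [Nat.zero_min]
            rw [show (⟨0, by omega⟩ : Fin (n+1)) = 0 from rfl]
            exact h0
          rw [e1, e2, sub_zero]
  calc (∑ i : Fin n, (ENNReal.ofReal ‖g (t i.succ) - g (t i.castSucc)‖) ^ p) ^ p⁻¹
      ≤ (∑ i : Fin n, ENNReal.ofReal (K * (t i.succ - t i.castSucc))) ^ p⁻¹ := by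
        apply ENNReal.rpow_le_rpow (Finset.sum_le_sum fun i _ => hterm i) (by positivity)
    _ = (ENNReal.ofReal (∑ i : Fin n, K * (t i.succ - t i.castSucc))) ^ p⁻¹ := by
        rw [ENNReal.ofReal_sum_of_nonneg]
        intro i _
        have := hmono (Fin.castSucc_lt_succ (i := i))
        nlinarith
    _ = (ENNReal.ofReal K) ^ p⁻¹ := by
        rw [← Finset.mul_sum, htel, mul_one]
    _ = ENNReal.ofReal (K ^ p⁻¹) := (ENNReal.ofReal_rpow_of_nonneg hK (by positivity))

/-- **Existence of the `p`-variation frame process.** For `p > 2`, the Brownian frame process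
`(T_h^B)_{h ∈ [0,1]}`, `T_h^B(u) = B_{h-1+u}`, has a modification `S` such that for every
`h ∈ [0,1]`, a.s. `S_h = T_h^B` on `[0,1]`, and almost surely every `S_h` has finite
`p`-variation and `h ↦ S_h` is continuous in the `p`-variation norm `‖·‖_p = ‖·‖_∞ + V_p`. -/
theorem frame_process_modification {Ω : Type*} [MeasurableSpace Ω] (P : Measure Ω)
    [IsProbabilityMeasure P] (B : ℝ → Ω → ℝ) (hB : IsStdBM P B) (p : ℝ) (hp : 2 < p) :
    ∃ S : ℝ → Ω → ℝ → ℝ,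
      (∀ h ∈ Set.Icc (0:ℝ) 1, ∀ᵐ ω ∂P, ∀ u ∈ Set.Icc (0:ℝ) 1, S h ω u = B (h - 1 + u) ω) ∧
      (∀ᵐ ω ∂P,
        (∀ h ∈ Set.Icc (0:ℝ) 1, pVar p (S h ω) < ∞) ∧
        (∀ h₀ ∈ Set.Icc (0:ℝ) 1, ∀ ε : ℝ, 0 < ε → ∃ δ : ℝ, 0 < δ ∧
          ∀ h ∈ Set.Icc (0:ℝ) 1, |h - h₀| < δ →
            pNormE p (fun u => S h ω u - S h₀ ω u) < ENNReal.ofReal ε)) := by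
  classical
  have hp0 : (0:ℝ) < p := by linarith
  obtain ⟨q, hqdef⟩ : ∃ q : ℝ, q = (p+2)/2 := ⟨_, rfl⟩
  have hq2 : 2 < q := by rw [hqdef]; linarith
  have hqp : q < p := by rw [hqdef]; linarith
  have hq0 : (0:ℝ) < q := by linarith
  obtain ⟨α, hαdef⟩ : ∃ α : ℝ, α = 1/4 + 1/(2*q) := ⟨_, rfl⟩
  have hα0 : 0 < α := by rw [hαdef]; positivity
  have hα12 : α < 1/2 := by
    have h1 : 1/(2*q) < 1/4 := by
      rw [div_lt_div_iff₀ (by linarith) (by norm_num)]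
      linarith
    rw [hαdef]; linarith
  have hα1 : α < 1 := by linarith
  have hαq : 1 < α * q := by
    have h : α * q = q/4 + 1/2 := by rw [hαdef]; field_simp
    rw [h]; linarith
  have hαp : 1 < α * p := by nlinarith [mul_le_mul_of_nonneg_left hqp.le hα0.le]
  -- dyadic bad events
  obtain ⟨A, hA⟩ : ∃ A : ℕ → Set Ω, A = fun n => ⋃ k ∈ Finset.Icc (-(2:ℤ)^n + 1) ((2:ℤ)^n),
      {ω | ((2:ℝ)^n)⁻¹ ^ α ≤ |B ((k:ℝ)/2^n) ω - B (((k:ℝ)-1)/2^n) ω|} := ⟨_, rfl⟩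
  have hAle : ∀ n : ℕ, P (A n) ≤ ENNReal.ofReal ((2*2^n) *
      (Real.sqrt 2 * Real.exp (-((((2:ℝ)^n)⁻¹ ^ α)^2) / (4 * ((2:ℝ)^n)⁻¹)))) := by
    intro n
    have hε0 : (0:ℝ) ≤ ((2:ℝ)^n)⁻¹ ^ α := Real.rpow_nonneg (by positivity) α
    rw [hA]
    refine le_trans (measure_biUnion_finset_le _ _) ?_
    have hbound : ∀ k ∈ Finset.Icc (-(2:ℤ)^n + 1) ((2:ℤ)^n),
        P {ω | ((2:ℝ)^n)⁻¹ ^ α ≤ |B ((k:ℝ)/2^n) ω - B (((k:ℝ)-1)/2^n) ω|} ≤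
        ENNReal.ofReal (Real.sqrt 2 * Real.exp (-((((2:ℝ)^n)⁻¹ ^ α)^2) / (4 * ((2:ℝ)^n)⁻¹))) := by
      intro k hk
      rw [Finset.mem_Icc] at hk
      exact event_bound P B hB n hε0 k (by omega) hk.2
    have hcard : (Finset.Icc (-(2:ℤ)^n + 1) ((2:ℤ)^n)).card = 2*2^n := by
      rw [Int.card_Icc]
      rw [show (2:ℤ)^n + 1 - (-(2:ℤ)^n + 1) = ((2*2^n : ℕ):ℤ) by push_cast; ring]
      exact Int.toNat_natCast _
    calc ∑ k ∈ Finset.Icc (-(2:ℤ)^n + 1) ((2:ℤ)^n),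
          P {ω | ((2:ℝ)^n)⁻¹ ^ α ≤ |B ((k:ℝ)/2^n) ω - B (((k:ℝ)-1)/2^n) ω|}
        ≤ ∑ _k ∈ Finset.Icc (-(2:ℤ)^n + 1) ((2:ℤ)^n),
            ENNReal.ofReal (Real.sqrt 2 * Real.exp (-((((2:ℝ)^n)⁻¹ ^ α)^2) / (4 * ((2:ℝ)^n)⁻¹))) :=
          Finset.sum_le_sum hbound
      _ = (Finset.Icc (-(2:ℤ)^n + 1) ((2:ℤ)^n)).card •
            ENNReal.ofReal (Real.sqrt 2 * Real.exp (-((((2:ℝ)^n)⁻¹ ^ α)^2) / (4 * ((2:ℝ)^n)⁻¹))) :=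
          Finset.sum_const _
      _ ≤ ENNReal.ofReal ((2*2^n) *
            (Real.sqrt 2 * Real.exp (-((((2:ℝ)^n)⁻¹ ^ α)^2) / (4 * ((2:ℝ)^n)⁻¹)))) := by
          rw [hcard, nsmul_eq_mul, ← ENNReal.ofReal_natCast, ← ENNReal.ofReal_mul (by positivity)]
          apply ENNReal.ofReal_le_ofReal
          apply le_of_eq
          push_cast
          ring
  have hsum : ∑' n, P (A n) ≠ ⊤ :=
    ne_top_of_le_ne_top (tail_sum_ne_top hα0 hα12) (ENNReal.tsum_le_tsum hAle)
  have hBC : ∀ᵐ ω ∂P, ∀ᶠ n in atTop, ω ∉ A n := MeasureTheory.ae_eventually_notMem hsum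
  refine ⟨fun h ω u => B (h - 1 + u) ω, fun h hh => ae_of_all _ fun ω u hu => rfl, ?_⟩
  filter_upwards [hBC, hB.cont] with ω hω hcont
  obtain ⟨N, hN⟩ := eventually_atTop.mp hω
  have hH : ∀ n : ℕ, N ≤ n → ∀ k : ℤ, -2^n < k → k ≤ 2^n →
      |B ((k:ℝ)/2^n) ω - B (((k:ℝ)-1)/2^n) ω| ≤ ((2:ℝ)^n)⁻¹ ^ α := by
    intro n hn k hk1 hk2
    have hnot := hN n hn
    rw [hA] at hnot
    simp only [Set.mem_iUnion, Set.mem_setOf_eq, not_exists] at hnot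
    have := hnot k (Finset.mem_Icc.mpr ⟨by omega, hk2⟩)
    exact le_of_lt (not_le.mp this)
  obtain ⟨C₀, hC₀0, hC₀⟩ := chain hα0 hα1 hcont hH
  obtain ⟨C, hCdef⟩ : ∃ C : ℝ, C = C₀ + 1 := ⟨_, rfl⟩
  have hCpos : (0:ℝ) < C := by rw [hCdef]; linarith
  have hCne : C ≠ 0 := ne_of_gt hCpos
  have hC : ∀ s ∈ Set.Icc (-1:ℝ) 1, ∀ t ∈ Set.Icc (-1:ℝ) 1,
      |B t ω - B s ω| ≤ C * |t - s| ^ α := by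
    intro s hs t ht
    have h1 := hC₀ s hs t ht
    have h2 : (0:ℝ) ≤ |t - s| ^ α := Real.rpow_nonneg (abs_nonneg _) _
    rw [hCdef]
    nlinarith
  have hframe : ∀ h ∈ Set.Icc (0:ℝ) 1, ∀ u ∈ Set.Icc (0:ℝ) 1,
      h - 1 + u ∈ Set.Icc (-1:ℝ) 1 := by
    intro h hh u hu
    constructor
    · linarith [hh.1, hu.1]
    · linarith [hh.2, hu.2]
  constructor
  · -- finite p-variation of each frame
    intro h hh
    have hincr : ∀ u v : ℝ, 0 ≤ u → u < v → v ≤ 1 →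
        |B (h-1+v) ω - B (h-1+u) ω| ^ p ≤ (C^p) * (v - u) := by
      intro u v hu huv hv
      have hu1 : u ≤ 1 := by linarith
      have hv0 : (0:ℝ) ≤ v := by linarith
      have h1 : |B (h-1+v) ω - B (h-1+u) ω| ≤ C * (v-u)^α := by
        have := hC (h-1+u) (hframe h hh u ⟨hu, hu1⟩) (h-1+v) (hframe h hh v ⟨hv0, hv⟩)
        rw [show (h-1+v) - (h-1+u) = v - u by ring] at this
        rwa [abs_of_pos (by linarith : (0:ℝ) < v - u)] at this
      calc |B (h-1+v) ω - B (h-1+u) ω| ^ p ≤ (C * (v-u)^α)^p :=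
            Real.rpow_le_rpow (abs_nonneg _) h1 hp0.le
        _ = C^p * ((v-u)^α)^p :=
            Real.mul_rpow hCpos.le (Real.rpow_nonneg (by linarith : (0:ℝ) ≤ v - u) α)
        _ = C^p * (v-u)^(α*p) := by rw [← Real.rpow_mul (by linarith : (0:ℝ) ≤ v - u)]
        _ ≤ C^p * (v-u) := by
            apply mul_le_mul_of_nonneg_left ?_ (Real.rpow_nonneg hCpos.le p)
            calc (v-u)^(α*p) ≤ (v-u)^(1:ℝ) :=
                  Real.rpow_le_rpow_of_exponent_ge (by linarith) (by linarith) hαp.le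
              _ = v - u := Real.rpow_one _
    exact lt_of_le_of_lt
      (pVar_le_aux (g := fun u => B (h-1+u) ω) hp0 (Real.rpow_nonneg hCpos.le p) hincr)
      ENNReal.ofReal_lt_top
  · -- continuity in p-variation norm
    intro h₀ hh₀ ε hε
    obtain ⟨β, hβdef⟩ : ∃ β : ℝ, β = α*(p-q)*p⁻¹ := ⟨_, rfl⟩
    have hpq : (0:ℝ) < p - q := by linarith
    have hβ0 : 0 < β := by rw [hβdef]; positivity
    refine ⟨min ((ε/(2*C)) ^ α⁻¹) ((ε/(4*C)) ^ β⁻¹),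
      lt_min (Real.rpow_pos_of_pos (by positivity) _) (Real.rpow_pos_of_pos (by positivity) _), ?_⟩
    intro h hh hdist
    set r : ℝ := |h - h₀| with hrdef
    have hr0 : (0:ℝ) ≤ r := abs_nonneg _
    have hrα : (0:ℝ) ≤ r^α := Real.rpow_nonneg hr0 _
    have h2M : (0:ℝ) ≤ 2*(C*r^α) := by nlinarith
    have h2C : (0:ℝ) < 2*C := by linarith
    have hptw : ∀ u ∈ Set.Icc (0:ℝ) 1, |B (h-1+u) ω - B (h₀-1+u) ω| ≤ C * r^α := by
      intro u hu
      have := hC (h₀-1+u) (hframe h₀ hh₀ u hu) (h-1+u) (hframe h hh u hu)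
      rwa [show (h-1+u) - (h₀-1+u) = h - h₀ by ring] at this
    have hincr2 : ∀ u v : ℝ, 0 ≤ u → u < v → v ≤ 1 →
        |(B (h-1+v) ω - B (h₀-1+v) ω) - (B (h-1+u) ω - B (h₀-1+u) ω)| ^ p ≤
        ((2*(C*r^α))^(p-q) * ((2*C)^q)) * (v - u) := by
      intro u v hu huv hv
      have hu1 : u ≤ 1 := by linarith
      have hv0 : (0:ℝ) ≤ v := by linarith
      have b1 : |(B (h-1+v) ω - B (h₀-1+v) ω) - (B (h-1+u) ω - B (h₀-1+u) ω)| ≤ 2*(C*r^α) := by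
        have e1 := hptw u ⟨hu, hu1⟩
        have e2 := hptw v ⟨hv0, hv⟩
        calc |(B (h-1+v) ω - B (h₀-1+v) ω) - (B (h-1+u) ω - B (h₀-1+u) ω)|
            ≤ |B (h-1+v) ω - B (h₀-1+v) ω| + |B (h-1+u) ω - B (h₀-1+u) ω| := abs_sub _ _
          _ ≤ 2*(C*r^α) := by linarith
      have b2 : |(B (h-1+v) ω - B (h₀-1+v) ω) - (B (h-1+u) ω - B (h₀-1+u) ω)| ≤
          (2*C)*(v-u)^α := by
        have e1 : |B (h-1+v) ω - B (h-1+u) ω| ≤ C * (v-u)^α := by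
          have := hC (h-1+u) (hframe h hh u ⟨hu, hu1⟩) (h-1+v) (hframe h hh v ⟨hv0, hv⟩)
          rw [show (h-1+v) - (h-1+u) = v - u by ring] at this
          rwa [abs_of_pos (by linarith : (0:ℝ) < v - u)] at this
        have e2 : |B (h₀-1+v) ω - B (h₀-1+u) ω| ≤ C * (v-u)^α := by
          have := hC (h₀-1+u) (hframe h₀ hh₀ u ⟨hu, hu1⟩) (h₀-1+v) (hframe h₀ hh₀ v ⟨hv0, hv⟩)
          rw [show (h₀-1+v) - (h₀-1+u) = v - u by ring] at this
          rwa [abs_of_pos (by linarith : (0:ℝ) < v - u)] at this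
        calc |(B (h-1+v) ω - B (h₀-1+v) ω) - (B (h-1+u) ω - B (h₀-1+u) ω)|
            = |(B (h-1+v) ω - B (h-1+u) ω) - (B (h₀-1+v) ω - B (h₀-1+u) ω)| := by ring_nf
          _ ≤ |B (h-1+v) ω - B (h-1+u) ω| + |B (h₀-1+v) ω - B (h₀-1+u) ω| := abs_sub _ _
          _ ≤ (2*C)*(v-u)^α := by linarith
      set D : ℝ := |(B (h-1+v) ω - B (h₀-1+v) ω) - (B (h-1+u) ω - B (h₀-1+u) ω)| with hD
      by_cases hz : D = 0
      · rw [hz, Real.zero_rpow (ne_of_gt hp0)]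
        exact mul_nonneg (mul_nonneg (Real.rpow_nonneg h2M _)
          (Real.rpow_nonneg h2C.le _)) (by linarith)
      · have hDpos : 0 < D := lt_of_le_of_ne (abs_nonneg _) (Ne.symm hz)
        have hsplit : D^p = D^(p-q) * D^q := by
          rw [← Real.rpow_add hDpos]
          ring_nf
        rw [hsplit]
        have hb1 : D^(p-q) ≤ (2*(C*r^α))^(p-q) :=
          Real.rpow_le_rpow (abs_nonneg _) b1 hpq.le
        have hb2 : D^q ≤ ((2*C)*(v-u)^α)^q := Real.rpow_le_rpow (abs_nonneg _) b2 hq0.le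
        have hb3 : ((2*C)*(v-u)^α)^q = (2*C)^q * (v-u)^(α*q) := by
          rw [Real.mul_rpow h2C.le (Real.rpow_nonneg (by linarith : (0:ℝ) ≤ v - u) α),
            ← Real.rpow_mul (by linarith : (0:ℝ) ≤ v - u)]
        have hb4 : (v-u)^(α*q) ≤ (v-u) := by
          calc (v-u)^(α*q) ≤ (v-u)^(1:ℝ) :=
                Real.rpow_le_rpow_of_exponent_ge (by linarith) (by linarith) hαq.le
            _ = v - u := Real.rpow_one _
        have hb5 : D^q ≤ (2*C)^q * (v-u) := by
          refine le_trans hb2 ?_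
          rw [hb3]
          exact mul_le_mul_of_nonneg_left hb4 (Real.rpow_nonneg h2C.le q)
        calc D^(p-q) * D^q ≤ (2*(C*r^α))^(p-q) * ((2*C)^q * (v-u)) :=
              mul_le_mul hb1 hb5 (Real.rpow_nonneg hDpos.le q) (Real.rpow_nonneg h2M _)
          _ = ((2*(C*r^α))^(p-q) * ((2*C)^q)) * (v-u) := by ring
    have hpv := pVar_le_aux (g := fun x => B (h-1+x) ω - B (h₀-1+x) ω) hp0
      (mul_nonneg (Real.rpow_nonneg h2M _) (Real.rpow_nonneg h2C.le _)) hincr2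
    have hsup : supE (fun u => B (h-1+u) ω - B (h₀-1+u) ω) ≤ ENNReal.ofReal (C * r^α) := by
      rw [supE]
      exact iSup_le fun u => ENNReal.ofReal_le_ofReal (hptw u u.2)
    have hKval : ((2*(C*r^α))^(p-q) * ((2*C)^q)) ^ p⁻¹ = (2*C) * r^β := by
      by_cases hr : r = 0
      · rw [hr, Real.zero_rpow (ne_of_gt hα0), Real.zero_rpow (ne_of_gt hβ0), mul_zero, mul_zero,
          mul_zero, Real.zero_rpow (ne_of_gt hpq), zero_mul,
          Real.zero_rpow (inv_ne_zero (ne_of_gt hp0))]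
      · have hrp : (0:ℝ) < r := lt_of_le_of_ne hr0 (Ne.symm hr)
        have e1 : ((2*C)*r^α)^(p-q) = (2*C)^(p-q) * (r^α)^(p-q) :=
          Real.mul_rpow h2C.le hrα
        have e2 : (r^α)^(p-q) = r^(α*(p-q)) := (Real.rpow_mul hrp.le α (p-q)).symm
        have e3 : (2*C)^(p-q) * (2*C)^q = (2*C)^(p-q+q) := (Real.rpow_add h2C _ _).symm
        have e4 : p - q + q = p := by ring
        have e5 : ((2*C)^p * r^(α*(p-q)))^p⁻¹ = ((2*C)^p)^p⁻¹ * (r^(α*(p-q)))^p⁻¹ :=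
          Real.mul_rpow (Real.rpow_nonneg h2C.le _) (Real.rpow_nonneg hrp.le _)
        have e6 : ((2*C)^p)^p⁻¹ = 2*C := by
          rw [← Real.rpow_mul h2C.le, mul_inv_cancel₀ (ne_of_gt hp0), Real.rpow_one]

        have e7 : (r^(α*(p-q)))^p⁻¹ = r^β := by
          rw [← Real.rpow_mul hrp.le, hβdef]
        calc ((2*(C*r^α))^(p-q) * ((2*C)^q)) ^ p⁻¹
            = (((2*C)*r^α)^(p-q) * ((2*C)^q)) ^ p⁻¹ := by
              rw [show 2*(C*r^α) = (2*C)*r^α by ring]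
          _ = ((2*C)^p * r^(α*(p-q))) ^ p⁻¹ := by
              rw [e1, e2, show (2*C)^(p-q) * r^(α*(p-q)) * ((2*C)^q)
                = (2*C)^(p-q) * (2*C)^q * r^(α*(p-q)) by ring, e3, e4]
          _ = ((2*C)^p)^p⁻¹ * (r^(α*(p-q)))^p⁻¹ := e5
          _ = (2*C) * r^β := by rw [e6, e7]
    rw [hKval] at hpv
    have hrδ1 : r < (ε/(2*C)) ^ α⁻¹ := lt_of_lt_of_le hdist (min_le_left _ _)
    have hrδ2 : r < (ε/(4*C)) ^ β⁻¹ := lt_of_lt_of_le hdist (min_le_right _ _)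
    have hbound1 : C * r^α < ε/2 := by
      have h1 : r^α < ((ε/(2*C))^α⁻¹)^α := Real.rpow_lt_rpow hr0 hrδ1 hα0
      have h2 : ((ε/(2*C))^α⁻¹)^α = ε/(2*C) := by
        rw [← Real.rpow_mul (by positivity), inv_mul_cancel₀ (ne_of_gt hα0), Real.rpow_one]
      rw [h2] at h1
      calc C * r^α < C * (ε/(2*C)) := mul_lt_mul_of_pos_left h1 hCpos
        _ = ε/2 := by field_simp
    have hbound2 : (2*C) * r^β < ε/2 := by
      have h1 : r^β < ((ε/(4*C))^β⁻¹)^β := Real.rpow_lt_rpow hr0 hrδ2 hβ0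
      have h2 : ((ε/(4*C))^β⁻¹)^β = ε/(4*C) := by
        rw [← Real.rpow_mul (by positivity), inv_mul_cancel₀ (ne_of_gt hβ0), Real.rpow_one]
      rw [h2] at h1
      calc (2*C) * r^β < (2*C) * (ε/(4*C)) := mul_lt_mul_of_pos_left h1 h2C
        _ = ε/2 := by field_simp; ring
    have hrβ : (0:ℝ) ≤ r^β := Real.rpow_nonneg hr0 _
    have hfin : C*r^α + (2*C)*r^β < ε := by linarith
    show supE (fun u => B (h-1+u) ω - B (h₀-1+u) ω) +
        pVar p (fun u => B (h-1+u) ω - B (h₀-1+u) ω) < ENNReal.ofReal ε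
    calc supE (fun u => B (h-1+u) ω - B (h₀-1+u) ω) +
          pVar p (fun u => B (h-1+u) ω - B (h₀-1+u) ω)
        ≤ ENNReal.ofReal (C*r^α) + ENNReal.ofReal ((2*C)*r^β) := add_le_add hsup hpv
      _ = ENNReal.ofReal (C*r^α + (2*C)*r^β) :=
          (ENNReal.ofReal_add (mul_nonneg hCpos.le hrα) (mul_nonneg h2C.le hrβ)).symm
      _ < ENNReal.ofReal ε := (ENNReal.ofReal_lt_ofReal_iff hε).mpr hfin
end

section
/- Let p > 2, 0 ≤ h_1 < h_2 ≤ 1, and let g ∈ L²([−1,1]) with G(t) := ∫_{−1}^t g(s) ds. Then V_p(T_{h_2}^G − T_{h_1}^G) ≤ d_p ‖g‖_{L²([−1,1])} (h_2 − h_1)^{1/2 − 1/p}, where d_p := 2^{1/2 + 1/p} (1 + 2^{p/2})^{1/p}; equivalently, for every finite dissection 0 = t_0 < t_1 < ... < t_n = 1 of [0,1], Σ_{i=0}^{n−1} | ∫_{h_1−1+t_{i+1}}^{h_2−1+t_{i+1}} g(s) ds − ∫_{h_1−1+t_i}^{h_2−1+t_i} g(s) ds |^p ≤ d_p^p ‖g‖_{L²}^p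 (h_2 − h_1)^{(1/2 − 1/p)p}. -/
open MeasureTheory ProbabilityTheory Filter
open scoped ENNReal NNReal
open Fin.NatCast

/-- Cauchy–Schwarz for an interval integral of an `L²` function. -/
lemma cs_interval_aux {g : ℝ → ℝ} (hg : MemLp g 2 (volume.restrict (Set.Icc (-1:ℝ) 1)))
    {a b : ℝ} (ha : -1 ≤ a) (hab : a ≤ b) (hb : b ≤ 1) :
    |∫ s in a..b, g s| ≤ Real.sqrt (b - a) * Real.sqrt (∫ s in a..b, g s ^ 2) := by
  have hsub : Set.Ioc a b ⊆ Set.Icc (-1:ℝ) 1 := fun x hx =>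
    ⟨le_trans ha hx.1.le, le_trans hx.2 hb⟩
  have hmeas : (volume.restrict (Set.Ioc a b)) ≤ volume.restrict (Set.Icc (-1:ℝ) 1) :=
    Measure.restrict_mono hsub le_rfl
  have hgm : MemLp g 2 (volume.restrict (Set.Ioc a b)) := hg.mono_measure hmeas
  have h2 : (2:ℝ).HolderConjugate 2 := Real.HolderConjugate.two_two
  have h2e : (ENNReal.ofReal (2:ℝ)) = 2 := by
    rw [ENNReal.ofReal_ofNat]
  have habs : MemLp (fun s => |g s|) (ENNReal.ofReal (2:ℝ)) (volume.restrict (Set.Ioc a b)) := by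
    rw [h2e]
    simpa [Real.norm_eq_abs] using hgm.norm
  have hone : MemLp (fun _ : ℝ => (1:ℝ)) (ENNReal.ofReal (2:ℝ)) (volume.restrict (Set.Ioc a b)) := by
    rw [h2e]; exact memLp_const 1
  have hH := integral_mul_le_Lp_mul_Lq_of_nonneg h2
    (Eventually.of_forall fun s => abs_nonneg (g s))
    (Eventually.of_forall fun _ => zero_le_one) habs hone
  have hrpow2 : ∀ x : ℝ, |x| ^ (2:ℝ) = x ^ 2 := fun x => by
    rw [show (2:ℝ) = ((2:ℕ):ℝ) by norm_num, Real.rpow_natCast, sq_abs]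
  have hone2 : (fun s : ℝ => (1:ℝ) ^ (2:ℝ)) = fun _ : ℝ => (1:ℝ) := by
    funext s; rw [Real.one_rpow]
  simp only [mul_one, hrpow2, hone2] at hH
  have hvol : ∫ (_ : ℝ) in Set.Ioc a b, (1:ℝ) = b - a := by
    simp [Real.volume_Ioc, ENNReal.toReal_ofReal (sub_nonneg.2 hab), hab]
  rw [intervalIntegral.integral_of_le hab, intervalIntegral.integral_of_le hab]
  calc |∫ s in Set.Ioc a b, g s| ≤ ∫ s in Set.Ioc a b, |g s| := by
        simpa [Real.norm_eq_abs] using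
          norm_integral_le_integral_norm (μ := volume.restrict (Set.Ioc a b)) g
    _ ≤ (∫ s in Set.Ioc a b, g s ^ 2) ^ ((1:ℝ)/2) * (b - a) ^ ((1:ℝ)/2) := by
        rw [← hvol]; exact hH
    _ = Real.sqrt (b - a) * Real.sqrt (∫ s in Set.Ioc a b, g s ^ 2) := by
        rw [Real.sqrt_eq_rpow, Real.sqrt_eq_rpow]; ring

/-- Monotonicity of the integral of `g²` on subintervals of `[-1,1]`. -/
lemma q_mono_aux {g : ℝ → ℝ} (hg2 : IntegrableOn (fun s => g s ^ 2) (Set.Icc (-1:ℝ) 1) volume)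
    {a b : ℝ} (ha : -1 ≤ a) (hab : a ≤ b) (hb : b ≤ 1) :
    (∫ s in a..b, g s ^ 2) ≤ ∫ s in Set.Icc (-1:ℝ) 1, g s ^ 2 := by
  have hsub : Set.Ioc a b ⊆ Set.Icc (-1:ℝ) 1 := fun x hx =>
    ⟨le_trans ha hx.1.le, le_trans hx.2 hb⟩
  rw [intervalIntegral.integral_of_le hab]
  exact setIntegral_mono_set hg2 (Eventually.of_forall fun s => sq_nonneg _)
    (HasSubset.Subset.eventuallyLE hsub)

/-- **Cameron–Martin–Lipschitz bound for the `p`-variation of frame increments.** Let `p > 2`,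
`0 ≤ h₁ < h₂ ≤ 1`, `g ∈ L²([-1,1])` and `G(t) = ∫_{-1}^t g(s) ds`. Then
`V_p(T_{h₂}^G - T_{h₁}^G) ≤ d_p ‖g‖_{L²([-1,1])} (h₂-h₁)^{1/2-1/p}` with
`d_p = 2^{1/2+1/p} (1 + 2^{p/2})^{1/p}`. -/
theorem frame_pvar_cameronMartin_bound (p : ℝ) (hp : 2 < p)
    (h₁ h₂ : ℝ) (hh₁ : 0 ≤ h₁) (hh : h₁ < h₂) (hh₂ : h₂ ≤ 1)
    (g : ℝ → ℝ) (hg : MemLp g 2 (volume.restrict (Set.Icc (-1:ℝ) 1))) :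
    pVar p (fun u => (∫ s in (-1:ℝ)..(h₂ - 1 + u), g s) - ∫ s in (-1:ℝ)..(h₁ - 1 + u), g s) ≤
      ENNReal.ofReal ((2:ℝ) ^ ((1:ℝ)/2 + 1/p) * (1 + (2:ℝ) ^ (p/2)) ^ (1/p)) *
        eLpNorm g 2 (volume.restrict (Set.Icc (-1:ℝ) 1)) *
        ENNReal.ofReal ((h₂ - h₁) ^ ((1:ℝ)/2 - 1/p)) := by
  have hp0 : (0:ℝ) < p := by linarith
  have hp2 : (0:ℝ) ≤ p - 2 := by linarith
  have hfin : IsFiniteMeasure (volume.restrict (Set.Icc (-1:ℝ) 1)) := by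
    constructor
    rw [Measure.restrict_apply_univ, Real.volume_Icc]
    exact ENNReal.ofReal_lt_top
  have hgi : IntegrableOn g (Set.Icc (-1:ℝ) 1) volume := hg.integrable one_le_two
  have hg2i : IntegrableOn (fun s => g s ^ 2) (Set.Icc (-1:ℝ) 1) volume := hg.integrable_sq
  set K2 := ∫ s in Set.Icc (-1:ℝ) 1, g s ^ 2 with hK2def
  have hK2nn : (0:ℝ) ≤ K2 := setIntegral_nonneg measurableSet_Icc fun s _ => sq_nonneg _
  set δ := h₂ - h₁ with hδdef
  have hδ : 0 < δ := sub_pos.2 hh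
  have hδ1 : δ ≤ 1 := by simp only [hδdef]; linarith
  have hh₁1 : h₁ ≤ 1 := by linarith
  -- the L² norm
  have heL : eLpNorm g 2 (volume.restrict (Set.Icc (-1:ℝ) 1)) =
      ENNReal.ofReal (K2 ^ ((2:ℝ))⁻¹) := by
    rw [hg.eLpNorm_eq_integral_rpow_norm (by norm_num) (by norm_num)]
    have h2 : ((2:ℝ≥0∞)).toReal = (2:ℝ) := by norm_num
    rw [h2]
    have hint : (∫ a, ‖g a‖ ^ (2:ℝ) ∂(volume.restrict (Set.Icc (-1:ℝ) 1))) = K2 := by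
      rw [hK2def]
      refine integral_congr_ae (Eventually.of_forall fun s => ?_)
      simp only [Real.norm_eq_abs]
      rw [show (2:ℝ) = ((2:ℕ):ℝ) by norm_num, Real.rpow_natCast, sq_abs]
    rw [hint]
  refine iSup_le fun n => iSup_le fun t => iSup_le fun ht => iSup_le fun ht0 => iSup_le fun htl => ?_
  have htmem : ∀ i, t i ∈ Set.Icc (0:ℝ) 1 := fun i =>
    ⟨ht0 ▸ ht.monotone (Fin.zero_le i), htl ▸ ht.monotone (Fin.le_last i)⟩
  set a : Fin (n+1) → ℝ := fun i => h₁ - 1 + t i with hadef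
  set b : Fin (n+1) → ℝ := fun i => h₂ - 1 + t i with hbdef
  have hax : ∀ i, -1 ≤ a i ∧ a i ≤ 1 := fun i =>
    ⟨by simp only [hadef]; have := (htmem i).1; linarith,
     by simp only [hadef]; have := (htmem i).2; linarith⟩
  have hbx : ∀ i, -1 ≤ b i ∧ b i ≤ 1 := fun i =>
    ⟨by simp only [hbdef]; have := (htmem i).1; linarith,
     by simp only [hbdef]; have := (htmem i).2; linarith⟩
  have hab : ∀ i, a i ≤ b i := fun i => by simp only [hadef, hbdef]; linarith
  have hamono : ∀ i j : Fin (n+1), i ≤ j → a i ≤ a j := fun i j hij => by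
    simp only [hadef]; have := ht.monotone hij; linarith
  have hbmono : ∀ i j : Fin (n+1), i ≤ j → b i ≤ b j := fun i j hij => by
    simp only [hbdef]; have := ht.monotone hij; linarith
  -- interval integrability of g on subintervals of [-1,1]
  have hgInt : ∀ x y : ℝ, -1 ≤ x → x ≤ y → y ≤ 1 → IntervalIntegrable g volume x y := by
    intro x y hx hxy hy
    apply IntegrableOn.intervalIntegrable
    apply hgi.mono_set
    rw [Set.uIcc_of_le hxy]
    exact fun s hs => ⟨le_trans hx hs.1, le_trans hs.2 hy⟩
  have hg2Int : ∀ x y : ℝ, -1 ≤ x → x ≤ y → y ≤ 1 →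
      IntervalIntegrable (fun s => g s ^ 2) volume x y := by
    intro x y hx hxy hy
    apply IntegrableOn.intervalIntegrable
    apply hg2i.mono_set
    rw [Set.uIcc_of_le hxy]
    exact fun s hs => ⟨le_trans hx hs.1, le_trans hs.2 hy⟩
  -- difference of the primitive
  have hGsub : ∀ x y : ℝ, -1 ≤ x → x ≤ 1 → -1 ≤ y → y ≤ 1 →
      ((∫ s in (-1:ℝ)..y, g s) - ∫ s in (-1:ℝ)..x, g s) = ∫ s in x..y, g s := by
    intro x y hx1 hx2 hy1 hy2
    exact intervalIntegral.integral_interval_sub_left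
      (hgInt (-1) y le_rfl hy1 hy2) (hgInt (-1) x le_rfl hx1 hx2)
  set F : Fin n → ℝ := fun i =>
    ((∫ s in (-1:ℝ)..(h₂ - 1 + t i.succ), g s) - ∫ s in (-1:ℝ)..(h₁ - 1 + t i.succ), g s) -
    ((∫ s in (-1:ℝ)..(h₂ - 1 + t i.castSucc), g s) - ∫ s in (-1:ℝ)..(h₁ - 1 + t i.castSucc), g s)
    with hFdef
  have repV : ∀ i : Fin n, F i =
      (∫ s in a i.succ..b i.succ, g s) - ∫ s in a i.castSucc..b i.castSucc, g s := by
    intro i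
    rw [hFdef]
    simp only [hadef, hbdef]
    rw [← hGsub (h₁ - 1 + t i.succ) (h₂ - 1 + t i.succ) (hax i.succ).1 (hax i.succ).2
        (hbx i.succ).1 (hbx i.succ).2,
      ← hGsub (h₁ - 1 + t i.castSucc) (h₂ - 1 + t i.castSucc) (hax i.castSucc).1
        (hax i.castSucc).2 (hbx i.castSucc).1 (hbx i.castSucc).2]
  have repH : ∀ i : Fin n, F i =
      (∫ s in b i.castSucc..b i.succ, g s) - ∫ s in a i.castSucc..a i.succ, g s := by
    intro i
    have h1 : F i = ((∫ s in (-1:ℝ)..(h₂ - 1 + t i.succ), g s) -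
        ∫ s in (-1:ℝ)..(h₂ - 1 + t i.castSucc), g s) -
        ((∫ s in (-1:ℝ)..(h₁ - 1 + t i.succ), g s) -
        ∫ s in (-1:ℝ)..(h₁ - 1 + t i.castSucc), g s) := by rw [hFdef]; ring
    rw [h1]
    simp only [hadef, hbdef]
    rw [hGsub (h₂ - 1 + t i.castSucc) (h₂ - 1 + t i.succ) (hbx i.castSucc).1 (hbx i.castSucc).2
        (hbx i.succ).1 (hbx i.succ).2,
      hGsub (h₁ - 1 + t i.castSucc) (h₁ - 1 + t i.succ) (hax i.castSucc).1 (hax i.castSucc).2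
        (hax i.succ).1 (hax i.succ).2]
  have hcs : ∀ i : Fin (n+1), t i ≤ t i -- dummy
    := fun i => le_rfl
  have hle : ∀ i : Fin n, i.castSucc ≤ i.succ := fun i => (Fin.castSucc_lt_succ (i := i)).le
  -- vertical bound: |F i| ≤ 2 √δ √K2
  have hM : ∀ i : Fin n, |F i| ≤ 2 * (Real.sqrt δ * Real.sqrt K2) := by
    intro i
    have key : ∀ j : Fin (n+1), |∫ s in a j..b j, g s| ≤ Real.sqrt δ * Real.sqrt K2 := by
      intro j
      refine le_trans (cs_interval_aux hg (hax j).1 (hab j) (hbx j).2) ?_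
      have hδeq : b j - a j = δ := by simp only [hadef, hbdef, hδdef]; ring
      rw [hδeq]
      exact mul_le_mul_of_nonneg_left
        (Real.sqrt_le_sqrt (q_mono_aux hg2i (hax j).1 (hab j) (hbx j).2))
        (Real.sqrt_nonneg _)
    rw [repV i]
    have h1 := key i.succ
    have h2 := key i.castSucc
    have htri : |(∫ s in a i.succ..b i.succ, g s) - ∫ s in a i.castSucc..b i.castSucc, g s| ≤
        |∫ s in a i.succ..b i.succ, g s| + |∫ s in a i.castSucc..b i.castSucc, g s| :=
      abs_sub _ _
    linarith
  -- horizontal quadratic bound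
  have hFsq : ∀ i : Fin n, F i ^ 2 ≤
      2 * (∫ s in a i.castSucc..a i.succ, g s ^ 2) +
      2 * (∫ s in b i.castSucc..b i.succ, g s ^ 2) := by
    intro i
    have haa : a i.castSucc ≤ a i.succ := hamono _ _ (hle i)
    have hbb : b i.castSucc ≤ b i.succ := hbmono _ _ (hle i)
    have hQa0 : 0 ≤ ∫ s in a i.castSucc..a i.succ, g s ^ 2 :=
      intervalIntegral.integral_nonneg haa fun s _ => sq_nonneg _
    have hQb0 : 0 ≤ ∫ s in b i.castSucc..b i.succ, g s ^ 2 :=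
      intervalIntegral.integral_nonneg hbb fun s _ => sq_nonneg _
    have hlen_a : a i.succ - a i.castSucc ≤ 1 := by
      simp only [hadef]
      have := (htmem i.succ).2; have := (htmem i.castSucc).1; linarith
    have hlen_b : b i.succ - b i.castSucc ≤ 1 := by
      simp only [hbdef]
      have := (htmem i.succ).2; have := (htmem i.castSucc).1; linarith
    have hua : |∫ s in a i.castSucc..a i.succ, g s| ≤
        Real.sqrt (∫ s in a i.castSucc..a i.succ, g s ^ 2) := by
      refine le_trans (cs_interval_aux hg (hax i.castSucc).1 haa (hax i.succ).2) ?_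
      calc Real.sqrt (a i.succ - a i.castSucc) * Real.sqrt (∫ s in a i.castSucc..a i.succ, g s ^ 2)
          ≤ 1 * Real.sqrt (∫ s in a i.castSucc..a i.succ, g s ^ 2) := by
            apply mul_le_mul_of_nonneg_right _ (Real.sqrt_nonneg _)
            rw [show (1:ℝ) = Real.sqrt 1 by simp]
            exact Real.sqrt_le_sqrt hlen_a
        _ = _ := one_mul _
    have hub : |∫ s in b i.castSucc..b i.succ, g s| ≤
        Real.sqrt (∫ s in b i.castSucc..b i.succ, g s ^ 2) := by
      refine le_trans (cs_interval_aux hg (hbx i.castSucc).1 hbb (hbx i.succ).2) ?_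
      calc Real.sqrt (b i.succ - b i.castSucc) * Real.sqrt (∫ s in b i.castSucc..b i.succ, g s ^ 2)
          ≤ 1 * Real.sqrt (∫ s in b i.castSucc..b i.succ, g s ^ 2) := by
            apply mul_le_mul_of_nonneg_right _ (Real.sqrt_nonneg _)
            rw [show (1:ℝ) = Real.sqrt 1 by simp]
            exact Real.sqrt_le_sqrt hlen_b
        _ = _ := one_mul _
    have htri : |F i| ≤ Real.sqrt (∫ s in a i.castSucc..a i.succ, g s ^ 2) +
        Real.sqrt (∫ s in b i.castSucc..b i.succ, g s ^ 2) := by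
      rw [repH i]
      have := abs_sub (∫ s in b i.castSucc..b i.succ, g s) (∫ s in a i.castSucc..a i.succ, g s)
      linarith
    have hsqa := Real.sq_sqrt hQa0
    have hsqb := Real.sq_sqrt hQb0
    nlinarith [sq_abs (F i), abs_nonneg (F i), Real.sqrt_nonneg (∫ s in a i.castSucc..a i.succ, g s ^ 2),
      Real.sqrt_nonneg (∫ s in b i.castSucc..b i.succ, g s ^ 2),
      sq_nonneg (Real.sqrt (∫ s in a i.castSucc..a i.succ, g s ^ 2) -
        Real.sqrt (∫ s in b i.castSucc..b i.succ, g s ^ 2))]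
  -- sums of the quadratic pieces
  have hsum_gen : ∀ c : ℝ, 0 ≤ c → c + 1 ≤ 2 →
      (∑ i : Fin n, ∫ s in (c - 1 + t i.castSucc)..(c - 1 + t i.succ), g s ^ 2) ≤ K2 := by
    intro c hc hc1
    set aN : ℕ → ℝ := fun k => c - 1 + t (k : Fin (n+1)) with haN
    have hcast1 : ∀ i : Fin n, ((i : ℕ) : Fin (n+1)) = i.castSucc := by
      intro i
      ext
      simp [Fin.val_natCast, Nat.mod_eq_of_lt (lt_trans i.isLt (Nat.lt_succ_self n))]
    have hcast2 : ∀ i : Fin n, (((i : ℕ) + 1 : ℕ) : Fin (n+1)) = i.succ := by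
      intro i
      ext
      simp [Fin.val_natCast, Nat.mod_eq_of_lt (Nat.succ_lt_succ i.isLt)]
    have hmemN : ∀ k : ℕ, -1 ≤ aN k ∧ aN k ≤ 1 := by
      intro k
      constructor
      · simp only [haN]; have := (htmem (k : Fin (n+1))).1; linarith
      · simp only [haN]; have := (htmem (k : Fin (n+1))).2; linarith
    have hmonoN : ∀ k < n, aN k ≤ aN (k + 1) := by
      intro k hk
      simp only [haN]
      have : ((k : Fin (n+1))) ≤ ((k+1 : ℕ) : Fin (n+1)) := by
        rw [Fin.le_def, Fin.val_natCast, Fin.val_natCast,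
          Nat.mod_eq_of_lt (lt_trans hk (Nat.lt_succ_self n)),
          Nat.mod_eq_of_lt (Nat.succ_lt_succ hk)]
        exact Nat.le_succ k
      have := ht.monotone this
      linarith
    have hint : ∀ k < n, IntervalIntegrable (fun s => g s ^ 2) volume (aN k) (aN (k+1)) :=
      fun k hk => hg2Int _ _ (hmemN k).1 (hmonoN k hk) (hmemN (k+1)).2
    have hadj := intervalIntegral.sum_integral_adjacent_intervals hint
    have hrw : (∑ i : Fin n, ∫ s in (c - 1 + t i.castSucc)..(c - 1 + t i.succ), g s ^ 2) =
        ∑ k ∈ Finset.range n, ∫ s in aN k..aN (k+1), g s ^ 2 := by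
      rw [← Fin.sum_univ_eq_sum_range (fun k => ∫ s in aN k..aN (k+1), g s ^ 2) n]
      refine Finset.sum_congr rfl fun i _ => ?_
      simp only [haN, hcast1 i, hcast2 i]
    rw [hrw, hadj]
    have h0N : aN 0 = c - 1 := by
      simp only [haN, Nat.cast_zero, ht0]; ring
    have hnN : aN n = c - 1 + 1 := by
      simp only [haN, Fin.natCast_eq_last, htl]
    rw [h0N, hnN]
    exact q_mono_aux hg2i (by linarith) (by linarith) (by linarith)
  have hsumQa : (∑ i : Fin n, ∫ s in a i.castSucc..a i.succ, g s ^ 2) ≤ K2 := by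
    simpa only [hadef] using hsum_gen h₁ hh₁ (by linarith)
  have hsumQb : (∑ i : Fin n, ∫ s in b i.castSucc..b i.succ, g s ^ 2) ≤ K2 := by
    simpa only [hbdef] using hsum_gen h₂ (le_of_lt (lt_of_le_of_lt hh₁ hh)) (by linarith)
  -- per-term rpow bound
  set M := 2 * (Real.sqrt δ * Real.sqrt K2) with hMdef
  have hM0 : 0 ≤ M := by positivity
  have hterm : ∀ i : Fin n, |F i| ^ p ≤ M ^ (p - 2) * F i ^ 2 := by
    intro i
    rcases eq_or_lt_of_le (abs_nonneg (F i)) with h0 | h0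
    · rw [← h0, Real.zero_rpow hp0.ne', ← sq_abs, ← h0]
      positivity
    · have hsplit : |F i| ^ p = |F i| ^ (p - 2) * |F i| ^ (2:ℝ) := by
        rw [← Real.rpow_add h0]; ring_nf
      rw [hsplit, show |F i| ^ (2:ℝ) = F i ^ 2 by
        rw [show (2:ℝ) = ((2:ℕ):ℝ) by norm_num, Real.rpow_natCast, sq_abs]]
      exact mul_le_mul_of_nonneg_right
        (Real.rpow_le_rpow (abs_nonneg _) (hM i) hp2) (sq_nonneg _)
  set S := ∑ i : Fin n, |F i| ^ p with hSdef
  have hS0 : (0:ℝ) ≤ S := Finset.sum_nonneg fun i _ => Real.rpow_nonneg (abs_nonneg _) p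
  have hS : S ≤ M ^ (p - 2) * (4 * K2) := by
    have h1 : S ≤ ∑ i : Fin n, M ^ (p - 2) * F i ^ 2 :=
      Finset.sum_le_sum fun i _ => hterm i
    have h3 : ∑ i : Fin n, F i ^ 2 ≤ 4 * K2 := by
      have h := Finset.sum_le_sum fun i (_ : i ∈ Finset.univ) => hFsq i
      rw [Finset.sum_add_distrib, ← Finset.mul_sum, ← Finset.mul_sum] at h
      linarith
    calc S ≤ M ^ (p - 2) * ∑ i : Fin n, F i ^ 2 := by rw [Finset.mul_sum]; exact h1
      _ ≤ M ^ (p - 2) * (4 * K2) :=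
        mul_le_mul_of_nonneg_left h3 (Real.rpow_nonneg hM0 _)
  have hMp : M ^ (p - 2) = 2 ^ (p - 2) * (δ ^ ((p - 2) / 2) * K2 ^ ((p - 2) / 2)) := by
    rw [hMdef, Real.sqrt_eq_rpow, Real.sqrt_eq_rpow,
      Real.mul_rpow (by norm_num) (by positivity),
      Real.mul_rpow (by positivity) (by positivity),
      ← Real.rpow_mul hδ.le, ← Real.rpow_mul hK2nn,
      show (1:ℝ) / 2 * (p - 2) = (p - 2) / 2 by ring]
  have hfinal_eq : (2 ^ (p - 2) * (δ ^ ((p - 2) / 2) * K2 ^ ((p - 2) / 2))) * (4 * K2) =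
      2 ^ p * (K2 ^ (p / 2) * δ ^ ((p - 2) / 2)) := by
    have e1 : (2:ℝ) ^ p = 2 ^ (p - 2) * 2 ^ (2:ℝ) := by
      rw [← Real.rpow_add two_pos]; norm_num
    have e3 : (2:ℝ) ^ (2:ℝ) = 4 := by
      rw [show (4:ℝ) = 2 ^ (2:ℕ) by norm_num, ← Real.rpow_natCast 2 2]; norm_num
    have e2 : K2 ^ (p / 2) = K2 ^ ((p - 2) / 2) * K2 := by
      rw [show p / 2 = (p - 2) / 2 + 1 by ring,
        Real.rpow_add' hK2nn (by intro hcon; nlinarith), Real.rpow_one]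
    rw [e1, e3, e2]; ring
  have hS' : S ≤ 2 ^ p * (K2 ^ (p / 2) * δ ^ ((p - 2) / 2)) := by
    rw [← hfinal_eq, ← hMp]; exact hS
  have hSp : S ^ p⁻¹ ≤ 2 * (K2 ^ ((2:ℝ))⁻¹ * δ ^ ((1:ℝ) / 2 - 1 / p)) := by
    have h1 : S ^ p⁻¹ ≤ (2 ^ p * (K2 ^ (p / 2) * δ ^ ((p - 2) / 2))) ^ p⁻¹ :=
      Real.rpow_le_rpow hS0 hS' (by positivity)
    refine h1.trans_eq ?_
    rw [Real.mul_rpow (by positivity) (by positivity),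
      Real.mul_rpow (by positivity) (by positivity),
      ← Real.rpow_mul (by norm_num : (0:ℝ) ≤ 2),
      ← Real.rpow_mul hK2nn, ← Real.rpow_mul hδ.le,
      mul_inv_cancel₀ hp0.ne', Real.rpow_one,
      show p / 2 * p⁻¹ = ((2:ℝ))⁻¹ by field_simp; try ring,
      show (p - 2) / 2 * p⁻¹ = (1:ℝ) / 2 - 1 / p by field_simp; try ring]
  -- now the ENNReal side
  show (∑ i : Fin n, (ENNReal.ofReal ‖F i‖) ^ p) ^ p⁻¹ ≤
      ENNReal.ofReal ((2:ℝ) ^ ((1:ℝ)/2 + 1/p) * (1 + (2:ℝ) ^ (p/2)) ^ (1/p)) *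
        eLpNorm g 2 (volume.restrict (Set.Icc (-1:ℝ) 1)) *
        ENNReal.ofReal (δ ^ ((1:ℝ)/2 - 1/p))
  simp only [Real.norm_eq_abs]
  have hLHS : (∑ i : Fin n, (ENNReal.ofReal |F i|) ^ p) ^ p⁻¹ = ENNReal.ofReal (S ^ p⁻¹) := by
    rw [Finset.sum_congr rfl fun i _ =>
        ENNReal.ofReal_rpow_of_nonneg (abs_nonneg (F i)) hp0.le,
      ← ENNReal.ofReal_sum_of_nonneg fun i _ => Real.rpow_nonneg (abs_nonneg _) p,
      ← hSdef, ENNReal.ofReal_rpow_of_nonneg hS0 (by positivity)]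
  rw [hLHS, heL]
  clear_value S K2 δ
  set d := (2:ℝ) ^ ((1:ℝ) / 2 + 1 / p) * (1 + (2:ℝ) ^ (p / 2)) ^ (1 / p) with hddef
  clear_value d
  have hd0 : (0:ℝ) ≤ d := by rw [hddef]; positivity
  have h2d : (2:ℝ) ≤ d := by
    have hb : ((2:ℝ) ^ (p / 2)) ^ ((1:ℝ) / p) ≤ (1 + 2 ^ (p / 2)) ^ ((1:ℝ) / p) :=
      Real.rpow_le_rpow (by positivity) (by linarith [Real.rpow_nonneg (by norm_num : (0:ℝ) ≤ 2) (p / 2)]) (by positivity)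
    have hc : ((2:ℝ) ^ (p / 2)) ^ ((1:ℝ) / p) = 2 ^ ((1:ℝ) / 2) := by
      rw [← Real.rpow_mul (by norm_num : (0:ℝ) ≤ 2)]
      congr 1
      field_simp
      try ring
    have hd1 : (2:ℝ) ^ ((1:ℝ) / 2 + 1 / p) * 2 ^ ((1:ℝ) / 2) = 2 ^ (1 + (1:ℝ) / p) := by
      rw [← Real.rpow_add two_pos, show (1:ℝ) / 2 + 1 / p + 1 / 2 = 1 + (1:ℝ) / p by ring]
    have hd2 : (2:ℝ) ≤ 2 ^ (1 + (1:ℝ) / p) := by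
      calc (2:ℝ) = 2 ^ (1:ℝ) := (Real.rpow_one 2).symm
        _ ≤ 2 ^ (1 + (1:ℝ) / p) := Real.rpow_le_rpow_of_exponent_le one_le_two
            (by have : 0 < 1 / p := by positivity
                linarith)
    calc (2:ℝ) ≤ 2 ^ (1 + (1:ℝ) / p) := hd2
      _ = 2 ^ ((1:ℝ) / 2 + 1 / p) * 2 ^ ((1:ℝ) / 2) := hd1.symm
      _ ≤ 2 ^ ((1:ℝ) / 2 + 1 / p) * (1 + 2 ^ (p / 2)) ^ ((1:ℝ) / p) := by
          rw [← hc]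
          exact mul_le_mul_of_nonneg_left hb (by positivity)
      _ = d := by rw [hddef]
  rw [show ENNReal.ofReal d * ENNReal.ofReal (K2 ^ ((2:ℝ))⁻¹) * ENNReal.ofReal (δ ^ ((1:ℝ) / 2 - 1 / p)) =
      ENNReal.ofReal (d * K2 ^ ((2:ℝ))⁻¹ * δ ^ ((1:ℝ) / 2 - 1 / p)) by
    rw [← ENNReal.ofReal_mul hd0, ← ENNReal.ofReal_mul (by positivity)]]
  apply ENNReal.ofReal_le_ofReal
  calc S ^ p⁻¹ ≤ 2 * (K2 ^ ((2:ℝ))⁻¹ * δ ^ ((1:ℝ) / 2 - 1 / p)) := hSp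
    _ ≤ d * (K2 ^ ((2:ℝ))⁻¹ * δ ^ ((1:ℝ) / 2 - 1 / p)) :=
        mul_le_mul_of_nonneg_right h2d (by positivity)
    _ = d * K2 ^ ((2:ℝ))⁻¹ * δ ^ ((1:ℝ) / 2 - 1 / p) := by ring
end

section
/- Let p > 2 and 0 < h ≤ 1, and let a ≤ t_0 < t_1 < ... < t_n ≤ b be real numbers with b − a ≤ 2. Then Σ_{i=0}^{n−1} min( (t_{i+1} − t_i)^{p/2}, h^{p/2} ) ≤ (2 + 2^{p/2+1}) h^{p/2 − 1}. -/
open MeasureTheory ProbabilityTheory Filter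
open scoped ENNReal NNReal

lemma fin_telescope : ∀ (n : ℕ) (t : Fin (n+1) → ℝ),
    ∑ i : Fin n, (t i.succ - t i.castSucc) = t (Fin.last n) - t 0 := by
  intro n
  induction n with
  | zero => simp
  | succ n ih =>
    intro t
    rw [Fin.sum_univ_castSucc]
    have h1 : ∀ i : Fin n, t (i.castSucc).succ - t (i.castSucc).castSucc
        = (fun j : Fin (n+1) => t j.castSucc) i.succ
          - (fun j : Fin (n+1) => t j.castSucc) i.castSucc := by
      intro i; simp only [Fin.succ_castSucc]
    simp_rw [h1, ih (fun j : Fin (n+1) => t j.castSucc)]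
    simp [Fin.succ_last]

/-- **Dissection estimate.** Let `p > 2`, `0 < h ≤ 1` and `a ≤ t₀ < t₁ < ... < t_n ≤ b` with
`b - a ≤ 2`. Then `∑_{i=0}^{n-1} min((t_{i+1} - t_i)^{p/2}, h^{p/2}) ≤ (2 + 2^{p/2+1}) h^{p/2-1}`. -/
theorem dissection_min_bound (p h a b : ℝ) (hp : 2 < p) (h0 : 0 < h) (h1 : h ≤ 1)
    (hab : b - a ≤ 2) (n : ℕ) (t : Fin (n+1) → ℝ) (hmono : StrictMono t)
    (ha : a ≤ t 0) (hb : t (Fin.last n) ≤ b) :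
    ∑ i : Fin n, min ((t i.succ - t i.castSucc) ^ (p/2)) (h ^ (p/2)) ≤
      (2 + 2 ^ (p/2 + 1)) * h ^ (p/2 - 1) := by
  set q := p / 2 with hq
  have hq1 : 1 < q := by rw [hq]; linarith
  have hq0 : (0:ℝ) ≤ q - 1 := by linarith
  have hhq : (0:ℝ) ≤ h ^ (q - 1) := Real.rpow_nonneg h0.le _
  -- each term is bounded by (Δ i) * h^(q-1)
  have key : ∀ i : Fin n, min ((t i.succ - t i.castSucc) ^ q) (h ^ q)
      ≤ (t i.succ - t i.castSucc) * h ^ (q - 1) := by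
    intro i
    set d := t i.succ - t i.castSucc with hd
    have hd0 : 0 < d := sub_pos.mpr (hmono Fin.castSucc_lt_succ)
    rcases le_total d h with hdh | hhd
    · refine le_trans (min_le_left _ _) ?_
      calc d ^ q = d ^ (1 + (q - 1)) := by ring_nf
        _ = d ^ (1:ℝ) * d ^ (q - 1) := Real.rpow_add hd0 _ _
        _ = d * d ^ (q - 1) := by rw [Real.rpow_one]
        _ ≤ d * h ^ (q - 1) := by
            exact mul_le_mul_of_nonneg_left (Real.rpow_le_rpow hd0.le hdh hq0) hd0.le
    · refine le_trans (min_le_right _ _) ?_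
      calc h ^ q = h ^ (1 + (q - 1)) := by ring_nf
        _ = h ^ (1:ℝ) * h ^ (q - 1) := Real.rpow_add h0 _ _
        _ = h * h ^ (q - 1) := by rw [Real.rpow_one]
        _ ≤ d * h ^ (q - 1) := mul_le_mul_of_nonneg_right hhd hhq
  have hsum : ∑ i : Fin n, min ((t i.succ - t i.castSucc) ^ q) (h ^ q)
      ≤ (∑ i : Fin n, (t i.succ - t i.castSucc)) * h ^ (q - 1) := by
    rw [Finset.sum_mul]
    exact Finset.sum_le_sum fun i _ => key i
  have htel : ∑ i : Fin n, (t i.succ - t i.castSucc) = t (Fin.last n) - t 0 :=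
    fin_telescope n t
  have hlen : t (Fin.last n) - t 0 ≤ 2 := by
    have : t (Fin.last n) - t 0 ≤ b - a := by linarith
    linarith
  have h2 : (0:ℝ) ≤ 2 ^ (q + 1) := Real.rpow_nonneg (by norm_num) _
  calc ∑ i : Fin n, min ((t i.succ - t i.castSucc) ^ q) (h ^ q)
      ≤ (t (Fin.last n) - t 0) * h ^ (q - 1) := by rw [← htel]; exact hsum
    _ ≤ 2 * h ^ (q - 1) := mul_le_mul_of_nonneg_right hlen hhq
    _ ≤ (2 + 2 ^ (q + 1)) * h ^ (q - 1) := by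
        exact mul_le_mul_of_nonneg_right (by linarith) hhq
end
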